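/- Let λ > 0, c > 0, t > 0, and define F(u,t) = ∑_{k=0}^∞ (λ/(2c))^{2k} (c²t² − u²)^k / (k!)². Then ∫₀^{ct} (∂F/∂t)(u,t) du = (c/2)(e^{λt} + e^{−λt}) − c. -/

import Mathlib

/-- `F(u,t) = ∑_{k=0}^∞ (λ/(2c))^{2k} (c²t² − u²)^k / (k!)²`,
which equals `I₀((λ/c)√(c²t² − u²))` for `|u| ≤ ct`. -/
noncomputable def F (lam c u t : ℝ) : ℝ :=
  ∑' k : ℕ, (lam / (2 * c)) ^ (2 * k) * (c ^ 2 * t ^ 2 - u ^ 2) ^ k /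
    ((Nat.factorial k : ℝ)) ^ 2


lemma Jm (m : ℕ) (a : ℝ) :
    ∫ u in (0:ℝ)..a, (a ^ 2 - u ^ 2) ^ m =
      a ^ (2 * m + 1) * 4 ^ m * ((m.factorial : ℝ)) ^ 2 / ((2 * m + 1).factorial) := by
  induction m with
  | zero => simp
  | succ m ih =>
    have key : ∀ x : ℝ, HasDerivAt (fun u => u * (a ^ 2 - u ^ 2) ^ (m + 1))
        ((2 * (m : ℝ) + 3) * (a ^ 2 - x ^ 2) ^ (m + 1)
          - (2 * (m : ℝ) + 2) * a ^ 2 * (a ^ 2 - x ^ 2) ^ m) x := by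
      intro x
      have h1 : HasDerivAt (fun u : ℝ => a ^ 2 - u ^ 2) (-(2 * x)) x := by
        simpa using ((hasDerivAt_pow 2 x).const_sub (a ^ 2))
      have h2 := (hasDerivAt_id x).fun_mul (h1.fun_pow (m + 1))
      refine h2.congr_deriv ?_
      simp only [Nat.add_sub_cancel, pow_succ, id_eq]
      push_cast
      ring
    have hcont1 : Continuous fun u : ℝ => (a ^ 2 - u ^ 2) ^ (m + 1) := by continuity
    have hcont0 : Continuous fun u : ℝ => (a ^ 2 - u ^ 2) ^ m := by continuity
    have h0 : (∫ u in (0:ℝ)..a, ((2 * (m : ℝ) + 3) * (a ^ 2 - u ^ 2) ^ (m + 1)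
          - (2 * (m : ℝ) + 2) * a ^ 2 * (a ^ 2 - u ^ 2) ^ m))
        = a * (a ^ 2 - a ^ 2) ^ (m + 1) - 0 * (a ^ 2 - 0 ^ 2) ^ (m + 1) := by
      apply intervalIntegral.integral_eq_sub_of_hasDerivAt (fun x _ => key x)
      exact (((continuous_const.mul hcont1).sub
        ((continuous_const.mul continuous_const).mul hcont0))).intervalIntegrable _ _
    rw [intervalIntegral.integral_sub ((show Continuous fun u : ℝ =>
          (2 * (m : ℝ) + 3) * (a ^ 2 - u ^ 2) ^ (m + 1) from
            continuous_const.mul hcont1).intervalIntegrable _ _)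
        ((show Continuous fun u : ℝ => (2 * (m : ℝ) + 2) * a ^ 2 * (a ^ 2 - u ^ 2) ^ m from
          (continuous_const.mul continuous_const).mul hcont0).intervalIntegrable _ _),
      intervalIntegral.integral_const_mul, intervalIntegral.integral_const_mul] at h0
    rw [ih] at h0
    have hJ : (∫ u in (0:ℝ)..a, (a ^ 2 - u ^ 2) ^ (m + 1))
        = (2 * (m : ℝ) + 2) * a ^ 2 *
          (a ^ (2 * m + 1) * 4 ^ m * ((m.factorial : ℝ)) ^ 2 / ((2 * m + 1).factorial))
          / (2 * (m : ℝ) + 3) := by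
      have h3 : (2 * (m : ℝ) + 3) ≠ 0 := by positivity
      field_simp at h0 ⊢
      simp only [sub_self, mul_zero, zero_mul, zero_pow (Nat.succ_ne_zero m), sub_zero] at h0
      linarith [h0]
    rw [hJ]
    have e1 : (2 * (m + 1) + 1) = (2 * m + 1) + 2 := by ring
    rw [e1]
    have e2 : ((2 * m + 1) + 2).factorial = ((2 * m + 1) + 2) * (((2 * m + 1) + 1) * (2 * m + 1).factorial) := by
      rw [Nat.factorial_succ, Nat.factorial_succ]
    rw [e2]
    simp only [Nat.factorial_succ]
    have hfpos : (0 : ℝ) < (2 * m).factorial := by positivity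
    have hfpos2 : (0 : ℝ) < (m.factorial : ℝ) := by positivity
    push_cast
    field_simp
    ring

lemma aux_div (x y : ℝ) (hx : 0 ≤ x) (hxy : x ≤ y) (n : ℕ) :
    x ^ n / ((Nat.factorial n : ℝ)) ^ 2 ≤ y ^ n / (Nat.factorial n : ℝ) := by
  have h1 : (1 : ℝ) ≤ (Nat.factorial n : ℝ) := by
    exact_mod_cast Nat.one_le_iff_ne_zero.mpr (Nat.factorial_ne_zero n)
  have hxn : x ^ n ≤ y ^ n := pow_le_pow_left₀ hx hxy n
  have hyn : (0:ℝ) ≤ y ^ n := le_trans (by positivity) hxn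
  have h2 : ((Nat.factorial n : ℝ)) ≤ ((Nat.factorial n : ℝ)) ^ 2 := by nlinarith
  calc x ^ n / ((Nat.factorial n : ℝ)) ^ 2 ≤ y ^ n / ((Nat.factorial n : ℝ)) ^ 2 := by
        gcongr
    _ ≤ y ^ n / (Nat.factorial n : ℝ) := by
        apply div_le_div_of_nonneg_left hyn (by linarith) h2

lemma F_hasDerivAt (lam c u t : ℝ) :
    HasDerivAt (fun s => F lam c u s)
      (∑' k : ℕ, (lam / (2 * c)) ^ (2 * k) *
        ((k : ℝ) * (c ^ 2 * t ^ 2 - u ^ 2) ^ (k - 1) * (c ^ 2 * (2 * t))) /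
        ((Nat.factorial k : ℝ)) ^ 2) t := by
  set A : ℝ := lam / (2 * c) with hA
  set M : ℝ := c ^ 2 * (|t| + 1) ^ 2 + u ^ 2 + 1 with hMdef
  have hM1 : (1 : ℝ) ≤ M := by
    have h1 : (0:ℝ) ≤ c ^ 2 * (|t| + 1) ^ 2 := by positivity
    have h2 : (0:ℝ) ≤ u ^ 2 := sq_nonneg u
    rw [hMdef]; linarith
  set q : ℝ := A ^ 2 * M with hq
  have hq0 : (0 : ℝ) ≤ q := by positivity
  set C : ℝ := c ^ 2 * (2 * (|t| + 1)) with hC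
  have hC0 : (0 : ℝ) ≤ C := by positivity
  have hsum : Summable (fun k : ℕ => q ^ k * k / ((Nat.factorial k : ℝ)) ^ 2 * C) := by
    apply Summable.of_nonneg_of_le (fun k => by positivity) (fun k => ?_)
      ((Real.summable_pow_div_factorial q).mul_right C)
    have h1 : (k : ℝ) ≤ (Nat.factorial k : ℝ) := by exact_mod_cast Nat.self_le_factorial k
    have h2 : (0 : ℝ) < (Nat.factorial k : ℝ) := by positivity
    have h3 : q ^ k * k / ((Nat.factorial k : ℝ)) ^ 2 ≤ q ^ k / (Nat.factorial k : ℝ) := by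
      rw [div_le_div_iff₀ (by positivity) h2]
      have h4 : (0:ℝ) ≤ q ^ k := by positivity
      nlinarith [mul_le_mul_of_nonneg_left h1 (mul_nonneg h4 h2.le)]
    have h5 : (0:ℝ) ≤ q ^ k / (Nat.factorial k : ℝ) := by positivity
    nlinarith
  have hmem : t ∈ Set.Ioo (t - 1) (t + 1) := by constructor <;> linarith
  have hsabs : ∀ s : ℝ, s ∈ Set.Ioo (t - 1) (t + 1) → |s| ≤ |t| + 1 := by
    intro s hs
    rw [abs_le]
    constructor <;> nlinarith [hs.1, hs.2, neg_abs_le t, le_abs_self t]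
  have hXb : ∀ s : ℝ, s ∈ Set.Ioo (t - 1) (t + 1) → |c ^ 2 * s ^ 2 - u ^ 2| ≤ M := by
    intro s hs
    have h1 : s ^ 2 ≤ (|t| + 1) ^ 2 := by
      have h0 := hsabs s hs
      nlinarith [sq_abs s, abs_nonneg s, abs_nonneg t]
    rw [abs_le]
    constructor <;> nlinarith [sq_nonneg s, sq_nonneg u, sq_nonneg c,
      mul_nonneg (sq_nonneg c) (sq_nonneg s)]
  have hderiv : ∀ (k : ℕ) (s : ℝ),
      HasDerivAt (fun s => A ^ (2 * k) * (c ^ 2 * s ^ 2 - u ^ 2) ^ k / ((Nat.factorial k : ℝ)) ^ 2)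
        (A ^ (2 * k) * ((k : ℝ) * (c ^ 2 * s ^ 2 - u ^ 2) ^ (k - 1) * (c ^ 2 * (2 * s))) /
          ((Nat.factorial k : ℝ)) ^ 2) s := by
    intro k s
    have h1 : HasDerivAt (fun s : ℝ => c ^ 2 * s ^ 2 - u ^ 2) (c ^ 2 * (2 * s)) s := by
      simpa using (((hasDerivAt_pow 2 s).const_mul (c ^ 2)).sub_const (u ^ 2))
    exact ((h1.pow k).const_mul (A ^ (2 * k))).div_const _
  have habs_pow : ∀ k : ℕ, |A| ^ (2 * k) = (A ^ 2) ^ k := by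
    intro k; rw [pow_mul, sq_abs]
  have hbound : ∀ (k : ℕ) (s : ℝ), s ∈ Set.Ioo (t - 1) (t + 1) →
      ‖A ^ (2 * k) * ((k : ℝ) * (c ^ 2 * s ^ 2 - u ^ 2) ^ (k - 1) * (c ^ 2 * (2 * s))) /
        ((Nat.factorial k : ℝ)) ^ 2‖ ≤ q ^ k * k / ((Nat.factorial k : ℝ)) ^ 2 * C := by
    intro k s hs
    have hX := hXb s hs
    have hY : |c ^ 2 * (2 * s)| ≤ C := by
      rw [abs_mul, abs_mul, abs_of_nonneg (sq_nonneg c),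
        abs_of_nonneg (by norm_num : (0:ℝ) ≤ 2)]
      have h1 := hsabs s hs
      nlinarith [sq_nonneg c]
    have key : |c ^ 2 * s ^ 2 - u ^ 2| ^ (k - 1) * |c ^ 2 * (2 * s)| ≤ M ^ k * C := by
      have e1 : |c ^ 2 * s ^ 2 - u ^ 2| ^ (k - 1) ≤ M ^ (k - 1) :=
        pow_le_pow_left₀ (abs_nonneg _) hX _
      have e2 : M ^ (k - 1) ≤ M ^ k := pow_le_pow_right₀ hM1 (Nat.sub_le _ _)
      exact mul_le_mul (le_trans e1 e2) hY (abs_nonneg _) (by positivity)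
    rw [Real.norm_eq_abs, abs_div, abs_mul, abs_mul, abs_mul, abs_pow, abs_pow, abs_pow,
      Nat.abs_cast, Nat.abs_cast, habs_pow, mul_assoc ((k:ℝ))]
    calc (A ^ 2) ^ k * ((k:ℝ) * (|c ^ 2 * s ^ 2 - u ^ 2| ^ (k - 1) * |c ^ 2 * (2 * s)|)) /
          ((Nat.factorial k : ℝ)) ^ 2
        ≤ (A ^ 2) ^ k * ((k:ℝ) * (M ^ k * C)) / ((Nat.factorial k : ℝ)) ^ 2 := by
          gcongr
      _ = q ^ k * k / ((Nat.factorial k : ℝ)) ^ 2 * C := by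
          rw [hq, mul_pow]; ring
  have hsum0 : Summable (fun k : ℕ =>
      A ^ (2 * k) * (c ^ 2 * t ^ 2 - u ^ 2) ^ k / ((Nat.factorial k : ℝ)) ^ 2) := by
    apply Summable.of_norm_bounded (Real.summable_pow_div_factorial q)
    intro k
    have heq : ‖A ^ (2 * k) * (c ^ 2 * t ^ 2 - u ^ 2) ^ k / ((Nat.factorial k : ℝ)) ^ 2‖
        = (A ^ 2 * |c ^ 2 * t ^ 2 - u ^ 2|) ^ k / ((Nat.factorial k : ℝ)) ^ 2 := by
      rw [Real.norm_eq_abs, abs_div, abs_mul, abs_pow, abs_pow, abs_pow, Nat.abs_cast,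
        habs_pow, mul_pow]
    rw [heq]
    apply aux_div _ _ (by positivity) _ k
    rw [hq]
    exact mul_le_mul_of_nonneg_left (hXb t hmem) (sq_nonneg A)
  have hfun : (fun s => F lam c u s) = fun z : ℝ =>
      ∑' k : ℕ, A ^ (2 * k) * (c ^ 2 * z ^ 2 - u ^ 2) ^ k / ((Nat.factorial k : ℝ)) ^ 2 := by
    funext z; rw [F, hA]
  rw [hfun]
  exact hasDerivAt_tsum_of_isPreconnected hsum isOpen_Ioo isPreconnected_Ioo
    (fun k s _ => hderiv k s) hbound hmem hsum0 hmem

theorem integral_dF_dt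
    (lam c t : ℝ) (hlam : 0 < lam) (hc : 0 < c) (ht : 0 < t) :
    ∫ u in (0 : ℝ)..(c * t), deriv (fun s => F lam c u s) t =
      c / 2 * (Real.exp (lam * t) + Real.exp (-(lam * t))) - c := by
  set a : ℝ := c * t with ha
  have ha0 : 0 < a := by positivity
  set D : ℕ → ℝ → ℝ := fun k u => (lam / (2 * c)) ^ (2 * k) *
      ((k : ℝ) * (c ^ 2 * t ^ 2 - u ^ 2) ^ (k - 1) * (c ^ 2 * (2 * t))) /
      ((Nat.factorial k : ℝ)) ^ 2 with hD
  set V : ℕ → ℝ := fun k => match k with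
    | 0 => 0
    | (m+1) => c * (lam * t) ^ (2 * (m+1)) / ((2 * (m+1)).factorial) with hV
  -- step 1: rewrite the derivative
  have step1 : ∀ u : ℝ, deriv (fun s => F lam c u s) t = ∑' k : ℕ, D k u := by
    intro u; exact (F_hasDerivAt lam c u t).deriv
  -- continuity / integrability of each term
  have hcont : ∀ k : ℕ, Continuous (D k) := by
    intro k; rw [hD]; fun_prop
  have hInt : ∀ k : ℕ, MeasureTheory.Integrable (D k)
      (MeasureTheory.volume.restrict (Set.Ioc (0:ℝ) a)) :=
    fun k => (hcont k).integrableOn_Ioc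
  -- nonnegativity on the interval
  have hnonneg : ∀ k : ℕ, ∀ u ∈ Set.Ioc (0:ℝ) a, 0 ≤ D k u := by
    intro k u hu
    have hX : (0:ℝ) ≤ c ^ 2 * t ^ 2 - u ^ 2 := by
      have h1 : u ≤ a := hu.2
      have h2 : 0 < u := hu.1
      nlinarith
    have h1 : (0:ℝ) ≤ (lam / (2 * c)) ^ (2 * k) := Even.pow_nonneg (even_two_mul k) _
    rw [hD]
    have h2 : (0:ℝ) ≤ (c ^ 2 * t ^ 2 - u ^ 2) ^ (k - 1) := pow_nonneg hX _
    have h3 : (0:ℝ) ≤ c ^ 2 * (2 * t) := by positivity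
    positivity
  -- value of each integral
  have Ik : ∀ k : ℕ, (∫ u in Set.Ioc (0:ℝ) a, D k u) = V k := by
    intro k
    rw [← intervalIntegral.integral_of_le ha0.le]
    match k with
    | 0 => simp [hD, hV]
    | (m+1) =>
      have hc2t2 : c ^ 2 * t ^ 2 = a ^ 2 := by rw [ha]; ring
      have hEq : ∀ u : ℝ, D (m+1) u =
          ((lam / (2 * c)) ^ (2 * (m+1)) * (((m:ℝ)+1) * (c ^ 2 * (2 * t))) /
            (((m+1).factorial : ℝ)) ^ 2) * (a ^ 2 - u ^ 2) ^ m := by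
        intro u
        rw [hD]
        simp only [Nat.add_sub_cancel]
        rw [hc2t2]
        push_cast
        ring
      rw [intervalIntegral.integral_congr (fun u _ => hEq u),
        intervalIntegral.integral_const_mul, Jm]
      show _ = c * (lam * t) ^ (2 * (m+1)) / ((2 * (m+1)).factorial)
      have e1 : ((2 * (m+1)).factorial : ℝ)
          = (2*(m:ℝ)+2) * ((2*(m:ℝ)+1) * ((2*m).factorial : ℝ)) := by
        have : 2 * (m+1) = (2*m+1) + 1 := by ring
        rw [this, Nat.factorial_succ, Nat.factorial_succ]
        push_cast; ring
      have e2 : (((m+1).factorial : ℝ)) = ((m:ℝ)+1) * (m.factorial : ℝ) := by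
        rw [Nat.factorial_succ]; push_cast; ring
      have e3 : ((2*m+1).factorial : ℝ) = (2*(m:ℝ)+1) * ((2*m).factorial : ℝ) := by
        rw [Nat.factorial_succ]; push_cast; ring
      rw [e1, e2, e3, ha]
      rw [show (4:ℝ) ^ m = 2 ^ (2 * m) from by rw [pow_mul]; norm_num]
      have hf1 : (0:ℝ) < ((2*m).factorial : ℝ) := by positivity
      have hf2 : (0:ℝ) < (m.factorial : ℝ) := by positivity
      have hc0 : c ≠ 0 := hc.ne'
      field_simp
      simp only [div_pow, mul_pow]
      field_simp
      ring
  -- summability of V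
  have hcoshsum : Summable (fun n : ℕ => (lam*t) ^ (2*n) / ((2*n).factorial : ℝ)) :=
    (Real.hasSum_cosh (lam*t)).summable
  have hsumV : Summable V := by
    apply Summable.of_norm_bounded (hcoshsum.mul_left c)
    intro k
    match k with
    | 0 => simp [hV]; positivity
    | (m+1) =>
      rw [hV, Real.norm_eq_abs]
      have : (0:ℝ) ≤ c * (lam * t) ^ (2 * (m+1)) / ((2 * (m+1)).factorial) := by positivity
      rw [abs_of_nonneg this, mul_div_assoc]
  -- interchange
  rw [intervalIntegral.integral_congr (fun u _ => step1 u),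
    intervalIntegral.integral_of_le ha0.le]
  have hSumInt : Summable fun k => ∫ u in Set.Ioc (0:ℝ) a, ‖D k u‖ := by
    have heq : (fun k => ∫ u in Set.Ioc (0:ℝ) a, ‖D k u‖) = V := by
      funext k
      rw [MeasureTheory.setIntegral_congr_fun measurableSet_Ioc
        (fun u hu => Real.norm_of_nonneg (hnonneg k u hu))]
      exact Ik k
    rw [heq]; exact hsumV
  rw [← MeasureTheory.integral_tsum_of_summable_integral_norm hInt hSumInt]
  have : ∀ k : ℕ, (∫ u in Set.Ioc (0:ℝ) a, D k u) = V k := Ik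
  rw [tsum_congr this]
  -- compute the sum
  have hcosh : c * Real.cosh (lam*t) = c * ((lam*t)^(2*0)/((2*0).factorial : ℝ))
      + ∑' n : ℕ, c * ((lam*t)^(2*(n+1))/((2*(n+1)).factorial : ℝ)) := by
    rw [Real.cosh_eq_tsum, ← tsum_mul_left]
    exact (hcoshsum.mul_left c).tsum_eq_zero_add
  have hVsum : ∑' k : ℕ, V k = V 0 + ∑' n : ℕ, V (n+1) := hsumV.tsum_eq_zero_add
  have hVshift : ∑' n : ℕ, V (n+1)
      = ∑' n : ℕ, c * ((lam*t)^(2*(n+1))/((2*(n+1)).factorial : ℝ)) := by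
    apply tsum_congr; intro n
    show c * (lam*t) ^ (2*(n+1)) / (((2*(n+1)).factorial : ℕ) : ℝ) = _
    rw [mul_div_assoc]
  rw [hVsum, hVshift]
  have h0 : V 0 = 0 := rfl
  rw [h0]
  have : ∑' n : ℕ, c * ((lam*t)^(2*(n+1))/((2*(n+1)).factorial : ℝ))
      = c * Real.cosh (lam*t) - c := by
    rw [hcosh]; simp
  rw [this, Real.cosh_eq]
  ring
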